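/- Let V be a finite nonempty set, let E be a strongly connected relation on V (for all u, v there is a directed path of positive length from u to v), and let w assign a positive weight w(u,v) > 0 to each edge with E(u,v). Let σ : V → V be a bijection that is an automorphism of the weighted graph: E(u,v) ↔ E(σ(u), σ(v)) for all u, v, and w(σ(u), σ(v)) = w(u,v) whenever E(u,v). Then every positive vector y minimizing S(y) = Σ_{(u,v): E(u,v)} w(u,v) · y_u / y_v over positive vectors is σ-invariant: y_{σ(v)} = y_v for all v ∈ V. -/

import Mathlib

theorem monomial_quotient_sum_symmetric_minimizer {V : Type*} [Fintype V] [Nonempty V]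
    (E : V → V → Prop) [DecidableRel E]
    (hsc : ∀ u v : V, Relation.TransGen E u v)
    (w : V → V → ℝ) (hw : ∀ u v, E u v → 0 < w u v)
    (σ : V → V) (hσ : Function.Bijective σ)
    (hE : ∀ u v : V, E u v ↔ E (σ u) (σ v))
    (hwσ : ∀ u v : V, E u v → w (σ u) (σ v) = w u v)
    (S : (V → ℝ) → ℝ)
    (hS : ∀ y : V → ℝ,
      S y = ∑ u : V, ∑ v : V, if E u v then w u v * (y u / y v) else 0)
    (y : V → ℝ) (hy : ∀ v, 0 < y v)
    (hmin : ∀ z : V → ℝ, (∀ v, 0 < z v) → S y ≤ S z) :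
    ∀ v : V, y (σ v) = y v := by
  classical
  set F : V → V → ℝ := fun u v => if E u v then w u v * (y u / y v) else 0 with hF
  set z : V → ℝ := fun v => Real.sqrt (y v * y (σ v)) with hzdef
  have hz : ∀ v, 0 < z v := fun v => Real.sqrt_pos.mpr (mul_pos (hy v) (hy (σ v)))
  set T : V → V → ℝ := fun u v => if E u v then w u v * (z u / z v) else 0 with hT
  have hFσ : ∀ u v, (if E u v then w u v * (y (σ u) / y (σ v)) else 0) = F (σ u) (σ v) := by
    intro u v
    by_cases h : E u v
    · simp only [hF, if_pos h, if_pos ((hE u v).mp h), hwσ u v h]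
    · simp only [hF, if_neg h, if_neg (fun h' => h ((hE u v).mpr h'))]
  -- flattened sums
  have e1 : ∑ p : V × V, F p.1 p.2 = S y := by
    rw [hS]; exact (Fintype.sum_prod_type (f := fun p : V × V => F p.1 p.2)).symm ▸ rfl
  have e2 : ∑ p : V × V, F (σ p.1) (σ p.2) = S y := by
    have hb : Function.Bijective (Prod.map σ σ) := hσ.prodMap hσ
    have := Fintype.sum_bijective (Prod.map σ σ) hb
      (fun p : V × V => F (σ p.1) (σ p.2)) (fun p : V × V => F p.1 p.2) (fun p => rfl)
    rw [this, e1]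
  have e3 : ∑ p : V × V, T p.1 p.2 = S z := by
    rw [hS]; exact (Fintype.sum_prod_type (f := fun p : V × V => T p.1 p.2)).symm ▸ rfl
  set D : V × V → ℝ := fun p => F p.1 p.2 + F (σ p.1) (σ p.2) - 2 * T p.1 p.2 with hD
  have hD0 : ∀ p : V × V, 0 ≤ D p := by
    rintro ⟨u, v⟩
    simp only [hD]
    by_cases h : E u v
    · have hσe : E (σ u) (σ v) := (hE u v).mp h
      simp only [hF, hT, if_pos h, if_pos hσe, hwσ u v h]
      have ha : (0:ℝ) < y u / y v := div_pos (hy u) (hy v)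
      have hb : (0:ℝ) < y (σ u) / y (σ v) := div_pos (hy (σ u)) (hy (σ v))
      have hzuv : z u / z v = Real.sqrt (y u / y v) * Real.sqrt (y (σ u) / y (σ v)) := by
        simp only [hzdef]
        rw [Real.sqrt_mul (hy u).le, Real.sqrt_mul (hy v).le,
          Real.sqrt_div (hy u).le, Real.sqrt_div (hy (σ u)).le]
        field_simp
      rw [hzuv]
      have h1 := Real.sq_sqrt ha.le
      have h2 := Real.sq_sqrt hb.le
      have h3 := sq_nonneg (Real.sqrt (y u / y v) - Real.sqrt (y (σ u) / y (σ v)))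
      have hwp := hw u v h
      nlinarith [mul_nonneg hwp.le h3]
    · have hσe : ¬ E (σ u) (σ v) := fun h' => h ((hE u v).mpr h')
      simp only [hF, hT, if_neg h, if_neg hσe]
      norm_num
  have hsum : ∑ p : V × V, D p = 0 := by
    have hle : S y ≤ S z := hmin z hz
    have : ∑ p : V × V, D p =
        (∑ p : V × V, F p.1 p.2) + (∑ p : V × V, F (σ p.1) (σ p.2))
          - 2 * ∑ p : V × V, T p.1 p.2 := by
      simp only [hD]
      rw [Finset.sum_sub_distrib, Finset.sum_add_distrib, Finset.mul_sum]
    rw [this, e1, e2, e3]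
    have h0 : (0:ℝ) ≤ ∑ p : V × V, D p := Finset.sum_nonneg fun p _ => hD0 p
    rw [this, e1, e2, e3] at h0
    linarith
  have hDzero : ∀ p : V × V, D p = 0 := by
    intro p
    have := (Finset.sum_eq_zero_iff_of_nonneg (fun p _ => hD0 p)).mp hsum
    exact this p (Finset.mem_univ p)
  -- edge ratio equality
  have hedge : ∀ u v, E u v → y u / y v = y (σ u) / y (σ v) := by
    intro u v h
    have hd := hDzero (u, v)
    have hσe : E (σ u) (σ v) := (hE u v).mp h
    simp only [hD, hF, hT, if_pos h, if_pos hσe, hwσ u v h] at hd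
    have ha : (0:ℝ) < y u / y v := div_pos (hy u) (hy v)
    have hb : (0:ℝ) < y (σ u) / y (σ v) := div_pos (hy (σ u)) (hy (σ v))
    have hzuv : z u / z v = Real.sqrt (y u / y v) * Real.sqrt (y (σ u) / y (σ v)) := by
      simp only [hzdef]
      rw [Real.sqrt_mul (hy u).le, Real.sqrt_mul (hy v).le,
        Real.sqrt_div (hy u).le, Real.sqrt_div (hy (σ u)).le]
      field_simp
    rw [hzuv] at hd
    have h1 := Real.sq_sqrt ha.le
    have h2 := Real.sq_sqrt hb.le
    have hwp := hw u v h
    have hsq : (Real.sqrt (y u / y v) - Real.sqrt (y (σ u) / y (σ v)))^2 = 0 := by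
      have h3 := sq_nonneg (Real.sqrt (y u / y v) - Real.sqrt (y (σ u) / y (σ v)))
      nlinarith
    have heq : Real.sqrt (y u / y v) = Real.sqrt (y (σ u) / y (σ v)) := by
      have := pow_eq_zero_iff (n := 2) (by norm_num) |>.mp hsq
      linarith [sub_eq_zero.mp this]
    calc y u / y v = Real.sqrt (y u / y v) ^ 2 := (Real.sq_sqrt ha.le).symm
      _ = Real.sqrt (y (σ u) / y (σ v)) ^ 2 := by rw [heq]
      _ = y (σ u) / y (σ v) := Real.sq_sqrt hb.le
  -- edge => same value of f = y∘σ / y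
  have hcross : ∀ u v, E u v → y (σ u) / y u = y (σ v) / y v := by
    intro u v h
    have := hedge u v h
    rw [div_eq_div_iff (hy v).ne' (hy (σ v)).ne'] at this
    rw [div_eq_div_iff (hy u).ne' (hy v).ne']
    linear_combination -this
  have hconst : ∀ u v : V, y (σ u) / y u = y (σ v) / y v := by
    intro u v
    induction hsc u v with
    | single h => exact hcross _ _ h
    | tail _ h ih => exact ih.trans (hcross _ _ h)
  set v0 : V := Classical.arbitrary V with hv0
  set c : ℝ := y (σ v0) / y v0 with hc
  have hcy : ∀ v, y (σ v) = c * y v := by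
    intro v
    have := hconst v v0
    rw [div_eq_div_iff (hy v).ne' (hy v0).ne'] at this
    field_simp [hc, (hy v0).ne']
    have key : y (σ v) = y (σ v0) * y v / y v0 := by
      rw [eq_div_iff (hy v0).ne']; linear_combination this
    linear_combination key
  obtain ⟨vM, hvM⟩ := Finite.exists_max y
  obtain ⟨vm, hvm⟩ := Finite.exists_min y
  have hc1 : c ≤ 1 := by
    have h1 : c * y vM = y (σ vM) := (hcy vM).symm
    have h2 : y (σ vM) ≤ y vM := hvM (σ vM)
    nlinarith [hy vM]
  have hc2 : 1 ≤ c := by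
    have h1 : c * y vm = y (σ vm) := (hcy vm).symm
    have h2 : y vm ≤ y (σ vm) := hvm (σ vm)
    nlinarith [hy vm]
  intro v
  rw [hcy v, le_antisymm hc1 hc2, one_mul]
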